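/- (Davenport–Erdős–LeVeque criterion) Let (Ω, 𝒜, μ) be a probability space and (X_n) complex-valued random variables with |X_n| ≤ 1. Set Z_n = (1/n) Σ_{j=1}^n X_j. If Σ_{n=1}^∞ (1/n) ∫ |Z_n|² dμ < ∞, then Z_n → 0 μ-almost everywhere. -/

import Mathlib

open MeasureTheory Filter Finset
open scoped ENNReal Topology

namespace DEL

def u (q : ℕ) : ℕ → ℕ
  | 0 => 2 * q
  | k + 1 => u q k + u q k / q

variable {q : ℕ}

lemma u_ge (hq : 1 ≤ q) : ∀ k, 2 * q ≤ u q k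
  | 0 => le_rfl
  | k + 1 => le_trans (u_ge hq k) (Nat.le_add_right _ _)

lemma div_ge (hq : 1 ≤ q) (k : ℕ) : 2 ≤ u q k / q :=
  (Nat.le_div_iff_mul_le (by omega)).2 (by have := u_ge hq k; omega)

lemma u_lt (hq : 1 ≤ q) (k : ℕ) : u q k < u q (k + 1) := by
  have := div_ge hq k
  show u q k < u q k + u q k / q
  omega

lemma u_strictMono (hq : 1 ≤ q) : StrictMono (u q) :=
  strictMono_nat_of_lt_succ (u_lt hq)

lemma u_pos (hq : 1 ≤ q) (k : ℕ) : 0 < u q k := by have := u_ge hq k; omega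

lemma u_le_mul (hq : 1 ≤ q) (k : ℕ) : u q k ≤ 2 * q * (u q k / q) := by
  have hd : 2 ≤ u q k / q := div_ge hq k
  have hmod : u q k % q < q := Nat.mod_lt _ (by omega)
  have h := Nat.div_add_mod (u q k) q
  nlinarith [h, hd, hmod]

lemma exists_block (hq : 1 ≤ q) {K m : ℕ} (hm : u q K ≤ m) :
    ∃ k, K ≤ k ∧ u q k ≤ m ∧ m < u q (k + 1) := by
  have hmono := u_strictMono hq
  have hKm : K ≤ m := (hmono.le_apply).trans hm
  set k := Nat.findGreatest (fun k => u q k ≤ m) m with hk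
  have hPk : u q k ≤ m := Nat.findGreatest_spec (P := fun k => u q k ≤ m) hKm hm
  have hKk : K ≤ k := Nat.le_findGreatest hKm hm
  refine ⟨k, hKk, hPk, ?_⟩
  rcases le_or_gt (k + 1) m with h | h
  · have := Nat.findGreatest_is_greatest (P := fun k => u q k ≤ m) (Nat.lt_succ_self k) h
    exact Nat.lt_of_not_le this
  · exact lt_of_lt_of_le h (hmono.le_apply)

lemma key {Ω : Type*} [MeasurableSpace Ω] (μ : Measure Ω) [IsProbabilityMeasure μ]
    (Z : ℕ → Ω → ℂ) (hZm : ∀ n, Measurable (Z n))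
    (hZ1 : ∀ n ω, ‖Z n ω‖ ≤ 1)
    (hdiff : ∀ n m : ℕ, 1 ≤ n → n ≤ m → ∀ ω, ‖Z m ω - Z n ω‖ ≤ 2 * ((m : ℝ) - n) / n)
    (hA : Summable (fun n : ℕ => (1 / (n : ℝ)) * ∫ ω, ‖Z n ω‖ ^ 2 ∂μ))
    (q : ℕ) (hq : 1 ≤ q) :
    ∀ᵐ ω ∂μ, ∀ᶠ m in atTop, ‖Z m ω‖ ≤ 3 / q := by
  have hqR : (0:ℝ) < q := by exact_mod_cast hq
  set c : ℕ → ℝ≥0∞ := fun n => ENNReal.ofReal ((1 / (n : ℝ)) * ∫ ω, ‖Z n ω‖ ^ 2 ∂μ) with hc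
  have hAnn : ∀ n : ℕ, 0 ≤ (1 / (n : ℝ)) * ∫ ω, ‖Z n ω‖ ^ 2 ∂μ := fun n =>
    mul_nonneg (by positivity) (integral_nonneg fun ω => by positivity)
  have hTfin : ∑' n, c n ≠ ∞ := by
    rw [hc, ← ENNReal.ofReal_tsum_of_nonneg hAnn hA]
    exact ENNReal.ofReal_ne_top
  set f : ℕ → Ω → ℝ≥0∞ := fun n ω => ENNReal.ofReal ((1 / (n : ℝ)) * ‖Z n ω‖ ^ 2) with hf
  have hfm : ∀ n, Measurable (f n) := fun n =>
    (((hZm n).norm.pow_const 2).const_mul _).ennreal_ofReal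
  have hint : ∀ n : ℕ, Integrable (fun ω => (1 / (n : ℝ)) * ‖Z n ω‖ ^ 2) μ := by
    intro n
    have hb : Integrable (fun _ : Ω => (1:ℝ)) μ := integrable_const 1
    refine hb.mono' (((hZm n).norm.pow_const 2).const_mul _).aestronglyMeasurable
      (ae_of_all _ fun ω => ?_)
    rw [Real.norm_eq_abs, abs_of_nonneg (by positivity)]
    have h1 : ‖Z n ω‖ ^ 2 ≤ 1 := by
      calc ‖Z n ω‖ ^ 2 ≤ 1 ^ 2 := pow_le_pow_left₀ (norm_nonneg _) (hZ1 n ω) 2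
        _ = 1 := one_pow 2
    have h2 : (1 / (n : ℝ)) ≤ 1 := by
      rcases Nat.eq_zero_or_pos n with h | h
      · simp [h]
      · rw [div_le_one (by exact_mod_cast h)]; exact_mod_cast h
    nlinarith [norm_nonneg (Z n ω), sq_nonneg (‖Z n ω‖)]
  have hfint : ∀ n, ∫⁻ ω, f n ω ∂μ = c n := by
    intro n
    rw [hf, hc]
    rw [← ofReal_integral_eq_lintegral_ofReal (hint n)
      (ae_of_all _ fun ω => mul_nonneg (by positivity) (by positivity))]
    rw [integral_const_mul]
  set F : ℕ → Ω → ℝ≥0∞ := fun k ω => ∑ n ∈ Finset.Ico (u q k) (u q (k + 1)), f n ω with hF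
  have hFm : ∀ k, Measurable (F k) := fun k => Finset.measurable_sum _ fun n _ => hfm n
  have hFl : ∀ k, ∫⁻ ω, F k ω ∂μ = ∑ n ∈ Finset.Ico (u q k) (u q (k + 1)), c n := by
    intro k
    rw [hF]
    rw [lintegral_finset_sum _ fun n _ => hfm n]
    exact Finset.sum_congr rfl fun n _ => hfint n
  have hpartial : ∀ K, ∑ k ∈ Finset.range K, ∫⁻ ω, F k ω ∂μ
      = ∑ n ∈ Finset.Ico (u q 0) (u q K), c n := by
    intro K
    induction K with
    | zero => simp
    | succ K ih =>
      rw [Finset.sum_range_succ, ih, hFl]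
      exact Finset.sum_Ico_consecutive _ ((u_strictMono hq).monotone (Nat.zero_le K))
        (le_of_lt (u_lt hq K))
  have htot : ∑' k, ∫⁻ ω, F k ω ∂μ ≤ ∑' n, c n := by
    rw [ENNReal.tsum_eq_iSup_sum]
    refine iSup_le fun s => ?_
    obtain ⟨K, hK⟩ := s.exists_nat_subset_range
    calc ∑ k ∈ s, ∫⁻ ω, F k ω ∂μ ≤ ∑ k ∈ Finset.range K, ∫⁻ ω, F k ω ∂μ :=
          Finset.sum_le_sum_of_subset hK
      _ = ∑ n ∈ Finset.Ico (u q 0) (u q K), c n := hpartial K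
      _ ≤ ∑' n, c n := ENNReal.sum_le_tsum _
  have hae : ∀ᵐ ω ∂μ, ∑' k, F k ω < ∞ := by
    refine ae_lt_top (by exact Measurable.ennreal_tsum hFm) ?_
    rw [lintegral_tsum fun k => (hFm k).aemeasurable]
    exact (lt_of_le_of_lt htot hTfin.lt_top).ne
  filter_upwards [hae] with ω hω
  have hF0 : Tendsto (fun k => F k ω) atTop (𝓝 0) :=
    ENNReal.tendsto_atTop_zero_of_tsum_ne_top hω.ne
  set δ : ℝ := (1 / (q:ℝ)) ^ 2 / (2 * (q + 1)) with hδdef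
  have hδ : 0 < δ := by positivity
  have hev : ∀ᶠ k in atTop, F k ω < ENNReal.ofReal δ :=
    hF0.eventually_lt_const (ENNReal.ofReal_pos.2 hδ)
  obtain ⟨K₀, hK₀⟩ := eventually_atTop.1 hev
  refine eventually_atTop.2 ⟨u q K₀, fun m hm => ?_⟩
  obtain ⟨k, hKk, hkm, hmk⟩ := exists_block hq hm
  -- real block sum
  set B := Finset.Ico (u q k) (u q (k + 1)) with hB
  set G : ℝ := ∑ n ∈ B, (1 / (n : ℝ)) * ‖Z n ω‖ ^ 2 with hG
  have hGnn : 0 ≤ G := Finset.sum_nonneg fun n _ => mul_nonneg (by positivity) (by positivity)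
  have hFG : F k ω = ENNReal.ofReal G := by
    rw [hF, hG, ENNReal.ofReal_sum_of_nonneg fun n _ => mul_nonneg (by positivity) (by positivity)]
  have hGδ : G < δ := by
    have h := hK₀ k hKk
    rw [hFG, ENNReal.ofReal_lt_ofReal_iff hδ] at h
    exact h
  -- bounds on block endpoints
  have hu1 : 0 < u q k := u_pos hq k
  have huR : (0:ℝ) < u q k := by exact_mod_cast hu1
  have hdiv : (u q k : ℝ) / (2 * q) ≤ ((u q k / q : ℕ) : ℝ) := by
    have h := u_le_mul hq k
    have h' : (u q k : ℝ) ≤ 2 * q * ((u q k / q : ℕ) : ℝ) := by exact_mod_cast h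
    rw [div_le_iff₀ (by positivity)]
    linarith
  have hcastdiv : ((u q k / q : ℕ) : ℝ) ≤ (u q k : ℝ) / q := Nat.cast_div_le
  have hU : (u q (k + 1) : ℝ) ≤ (u q k : ℝ) * (q + 1) / q := by
    have h1 : (u q (k+1) : ℝ) = (u q k : ℝ) + ((u q k / q : ℕ) : ℝ) := by
      rw [show u q (k+1) = u q k + u q k / q from rfl]; push_cast; ring
    rw [h1]
    have : (u q k : ℝ) + (u q k : ℝ) / q = (u q k : ℝ) * (q + 1) / q := by field_simp
    linarith
  have hUpos : (0:ℝ) < (u q (k+1) : ℝ) := by exact_mod_cast u_pos hq (k+1)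
  -- lower bound on weight sum
  have hW : 1 / (2 * ((q:ℝ) + 1)) ≤ ∑ n ∈ B, (1 / (n : ℝ)) := by
    have hcard : B.card = u q k / q := by
      rw [hB, Nat.card_Ico, show u q (k+1) = u q k + u q k / q from rfl,
        Nat.add_sub_cancel_left]
    have hstep : (B.card : ℝ) * (1 / (u q (k+1) : ℝ)) ≤ ∑ n ∈ B, (1 / (n : ℝ)) := by
      have := Finset.card_nsmul_le_sum B (fun n => (1 / (n : ℝ))) (1 / (u q (k+1) : ℝ))
        (fun n hn => by
          rw [hB, Finset.mem_Ico] at hn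
          have hn0 : (0:ℝ) < n := by
            have : 0 < n := lt_of_lt_of_le hu1 hn.1
            exact_mod_cast this
          exact one_div_le_one_div_of_le hn0 (by exact_mod_cast le_of_lt hn.2))
      simpa [nsmul_eq_mul] using this
    have h2 : 1 / (2 * ((q:ℝ) + 1)) ≤ (B.card : ℝ) * (1 / (u q (k+1) : ℝ)) := by
      rw [hcard, ← div_eq_mul_one_div]
      calc 1 / (2 * ((q:ℝ) + 1)) = ((u q k : ℝ) / (2 * q)) / ((u q k : ℝ) * (q + 1) / q) := by
            field_simp
        _ ≤ ((u q k / q : ℕ) : ℝ) / (u q (k+1) : ℝ) :=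
            div_le_div₀ (by positivity) hdiv hUpos hU
    exact h2.trans hstep
  -- select good index in block
  have hsel : ∃ n ∈ B, ‖Z n ω‖ ^ 2 ≤ 2 * ((q:ℝ) + 1) * G := by
    by_contra h
    push_neg at h
    have hne : B.Nonempty := ⟨u q k, Finset.mem_Ico.2 ⟨le_rfl, u_lt hq k⟩⟩
    have hlt : ∑ n ∈ B, (1 / (n : ℝ)) * (2 * ((q:ℝ) + 1) * G)
        < ∑ n ∈ B, (1 / (n : ℝ)) * ‖Z n ω‖ ^ 2 := by
      refine Finset.sum_lt_sum_of_nonempty hne fun n hn => ?_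
      have hn0 : (0:ℝ) < n := by
        rw [hB, Finset.mem_Ico] at hn
        exact_mod_cast lt_of_lt_of_le hu1 hn.1
      exact mul_lt_mul_of_pos_left (h n hn) (by positivity)
    rw [← Finset.sum_mul] at hlt
    have hG2 : G ≤ (∑ n ∈ B, (1 / (n : ℝ))) * (2 * ((q:ℝ) + 1) * G) := by
      have := mul_le_mul_of_nonneg_right hW (by positivity : (0:ℝ) ≤ 2 * ((q:ℝ) + 1) * G)
      calc G = 1 / (2 * ((q:ℝ) + 1)) * (2 * ((q:ℝ) + 1) * G) := by field_simp
        _ ≤ _ := this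
    rw [← hG] at hlt
    linarith
  obtain ⟨n, hnB, hn⟩ := hsel
  rw [hB, Finset.mem_Ico] at hnB
  have hn1 : 1 ≤ n := le_trans (by omega : 1 ≤ u q k) hnB.1
  -- ‖Z n ω‖ ≤ 1/q
  have hZn : ‖Z n ω‖ ≤ 1 / q := by
    have h2 : ‖Z n ω‖ ^ 2 ≤ (1 / (q:ℝ)) ^ 2 := by
      have : 2 * ((q:ℝ) + 1) * G ≤ 2 * ((q:ℝ) + 1) * δ := by nlinarith
      have hδ2 : 2 * ((q:ℝ) + 1) * δ = (1 / (q:ℝ)) ^ 2 := by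
        rw [hδdef]; field_simp
      linarith
    have := Real.sqrt_le_sqrt h2
    rwa [Real.sqrt_sq (norm_nonneg _), Real.sqrt_sq (by positivity)] at this
  -- gap bound within block
  have hgap : ∀ a b : ℕ, u q k ≤ a → b < u q (k+1) → a ≤ b → ‖Z b ω - Z a ω‖ ≤ 2 / q := by
    intro a b ha hb hab
    have ha1 : 1 ≤ a := le_trans (by omega : 1 ≤ u q k) ha
    have haR : (0:ℝ) < a := by exact_mod_cast ha1
    have hbound := hdiff a b ha1 hab ω
    have hnum : (b:ℝ) - a ≤ (u q k : ℝ) / q := by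
      have hb' : b < u q k + u q k / q := by
        rw [show u q (k+1) = u q k + u q k / q from rfl] at hb; exact hb
      have : (b:ℝ) < (u q k : ℝ) + ((u q k / q : ℕ) : ℝ) := by exact_mod_cast hb'
      have haR2 : (u q k : ℝ) ≤ a := by exact_mod_cast ha
      linarith [hcastdiv]
    calc ‖Z b ω - Z a ω‖ ≤ 2 * ((b:ℝ) - a) / a := hbound
      _ ≤ 2 * ((u q k : ℝ) / q) / (u q k : ℝ) := by
          apply div_le_div₀ (by positivity) (by linarith) huR (by exact_mod_cast ha)
      _ = 2 / q := by field_simp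
  have hgap2 : ‖Z m ω - Z n ω‖ ≤ 2 / q := by
    rcases le_total n m with h | h
    · exact hgap n m hnB.1 hmk h
    · rw [norm_sub_rev]; exact hgap m n hkm hnB.2 h
  calc ‖Z m ω‖ ≤ ‖Z n ω‖ + ‖Z m ω - Z n ω‖ := by
        have := norm_sub_norm_le (Z m ω) (Z n ω); linarith
    _ ≤ 1 / q + 2 / q := add_le_add hZn hgap2
    _ = 3 / q := by ring

end DEL

open DEL in
/-- Davenport–Erdős–LeVeque criterion: if `|X_n| ≤ 1` and
`Σ (1/n) ∫ |Z_n|² < ∞` where `Z_n = (1/n) Σ_{j=1}^n X_j`, then `Z_n → 0` a.e. -/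
theorem davenport_erdos_leveque {Ω : Type*} [MeasurableSpace Ω]
    (μ : Measure Ω) [IsProbabilityMeasure μ] (X : ℕ → Ω → ℂ)
    (hmeas : ∀ n, Measurable (X n)) (hbd : ∀ n ω, ‖X n ω‖ ≤ 1)
    (Z : ℕ → Ω → ℂ)
    (hZ : ∀ n ω, Z n ω = (1 / (n : ℂ)) * ∑ j ∈ Finset.Icc 1 n, X j ω)
    (hsum : Summable (fun n : ℕ => (1 / (n + 1 : ℝ)) * ∫ ω, ‖Z (n + 1) ω‖ ^ 2 ∂μ)) :
    ∀ᵐ ω ∂μ, Tendsto (fun n => Z n ω) atTop (nhds 0) := by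
  have hZm : ∀ n, Measurable (Z n) := by
    intro n
    have : Z n = fun ω => (1 / (n : ℂ)) * ∑ j ∈ Finset.Icc 1 n, X j ω :=
      funext (hZ n)
    rw [this]
    exact (Finset.measurable_sum _ fun j _ => hmeas j).const_mul _
  have hsumnorm : ∀ (s : Finset ℕ) ω, ‖∑ j ∈ s, X j ω‖ ≤ (s.card : ℝ) := by
    intro s ω
    calc ‖∑ j ∈ s, X j ω‖ ≤ ∑ j ∈ s, ‖X j ω‖ := norm_sum_le _ _
      _ ≤ ∑ _j ∈ s, (1:ℝ) := Finset.sum_le_sum fun j _ => hbd j ω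
      _ = (s.card : ℝ) := by simp
  have hnormInv : ∀ n : ℕ, ‖(1 / (n : ℂ))‖ = 1 / (n : ℝ) := by
    intro n
    rw [norm_div, norm_one, Complex.norm_natCast]
  have hZ1 : ∀ n ω, ‖Z n ω‖ ≤ 1 := by
    intro n ω
    rw [hZ n ω, norm_mul, hnormInv]
    rcases Nat.eq_zero_or_pos n with h | h
    · subst h; simp
    · have hnR : (0:ℝ) < n := by exact_mod_cast h
      have hcard : ((Finset.Icc 1 n).card : ℝ) = n := by
        rw [Nat.card_Icc]
        have : n + 1 - 1 = n := by omega
        rw [this]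
      calc (1 / (n:ℝ)) * ‖∑ j ∈ Finset.Icc 1 n, X j ω‖
          ≤ (1 / (n:ℝ)) * n := by
            rw [← hcard]
            exact mul_le_mul_of_nonneg_left (hsumnorm _ ω) (by positivity)
        _ = 1 := by field_simp
  have hdiff : ∀ n m : ℕ, 1 ≤ n → n ≤ m → ∀ ω,
      ‖Z m ω - Z n ω‖ ≤ 2 * ((m : ℝ) - n) / n := by
    intro n m hn hnm ω
    have hm : 1 ≤ m := hn.trans hnm
    have hnR : (0:ℝ) < n := by exact_mod_cast hn
    have hmR : (0:ℝ) < m := by exact_mod_cast hm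
    have hnmR : (n:ℝ) ≤ m := by exact_mod_cast hnm
    have hIcc : ∀ t : ℕ, Finset.Icc 1 t = Finset.Ioc 0 t := fun t => by rw [← Finset.Icc_add_one_left_eq_Ioc, zero_add]
    set S := ∑ j ∈ Finset.Ioc 0 n, X j ω with hS
    set T := ∑ j ∈ Finset.Ioc n m, X j ω with hT
    have hsplit : ∑ j ∈ Finset.Icc 1 m, X j ω = S + T := by
      rw [hIcc, hS, hT, Finset.sum_Ioc_consecutive _ (Nat.zero_le n) hnm]
    have hkey : Z m ω - Z n ω = (1 / (m : ℂ)) * T + ((1 / (m : ℂ)) - (1 / (n : ℂ))) * S := by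
      rw [hZ m ω, hZ n ω, hsplit, hIcc n, ← hS]; ring
    have hSnorm : ‖S‖ ≤ (n : ℝ) := by
      have := hsumnorm (Finset.Ioc 0 n) ω
      rwa [Nat.card_Ioc, Nat.sub_zero] at this
    have hTnorm : ‖T‖ ≤ (m : ℝ) - n := by
      have := hsumnorm (Finset.Ioc n m) ω
      rwa [Nat.card_Ioc, Nat.cast_sub hnm] at this
    have hdnorm : ‖(1 / (m : ℂ)) - (1 / (n : ℂ))‖ = 1 / (n:ℝ) - 1 / m := by
      have heq : (1 / (m : ℂ)) - (1 / (n : ℂ)) = (((1 / (m:ℝ) - 1 / (n:ℝ)) : ℝ) : ℂ) := by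
        push_cast; ring
      rw [heq, Complex.norm_real, Real.norm_eq_abs, abs_of_nonpos (by
        have : 1 / (m:ℝ) ≤ 1 / n := one_div_le_one_div_of_le hnR hnmR
        linarith)]
      ring
    have h1 : ‖(1 / (m : ℂ)) * T‖ ≤ ((m:ℝ) - n) / n := by
      rw [norm_mul, hnormInv]
      calc (1 / (m:ℝ)) * ‖T‖ ≤ (1 / (m:ℝ)) * ((m:ℝ) - n) :=
            mul_le_mul_of_nonneg_left hTnorm (by positivity)
        _ = ((m:ℝ) - n) / m := by ring
        _ ≤ ((m:ℝ) - n) / n := by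
            rw [div_le_div_iff₀ hmR hnR]; nlinarith
    have h2 : ‖((1 / (m : ℂ)) - (1 / (n : ℂ))) * S‖ ≤ ((m:ℝ) - n) / n := by
      rw [norm_mul, hdnorm]
      calc (1 / (n:ℝ) - 1 / m) * ‖S‖ ≤ (1 / (n:ℝ) - 1 / m) * n := by
            apply mul_le_mul_of_nonneg_left hSnorm
            have : 1 / (m:ℝ) ≤ 1 / n := one_div_le_one_div_of_le hnR hnmR
            linarith
        _ = ((m:ℝ) - n) / m := by field_simp
        _ ≤ ((m:ℝ) - n) / n := by
            rw [div_le_div_iff₀ hmR hnR]; nlinarith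
    calc ‖Z m ω - Z n ω‖
        = ‖(1 / (m : ℂ)) * T + ((1 / (m : ℂ)) - (1 / (n : ℂ))) * S‖ := by rw [hkey]
      _ ≤ ‖(1 / (m : ℂ)) * T‖ + ‖((1 / (m : ℂ)) - (1 / (n : ℂ))) * S‖ := norm_add_le _ _
      _ ≤ ((m:ℝ) - n) / n + ((m:ℝ) - n) / n := add_le_add h1 h2
      _ = 2 * ((m : ℝ) - n) / n := by ring
  have hA : Summable (fun n : ℕ => (1 / (n : ℝ)) * ∫ ω, ‖Z n ω‖ ^ 2 ∂μ) := by
    apply (summable_nat_add_iff 1).mp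
    convert hsum using 2 with n
    · rfl
    · simp
  have hkeyall : ∀ᵐ ω ∂μ, ∀ q : ℕ, ∀ᶠ m in atTop, ‖Z m ω‖ ≤ 3 / ((q:ℝ) + 1) := by
    rw [ae_all_iff]
    intro q
    have := key μ Z hZm hZ1 hdiff hA (q + 1) (Nat.succ_le_succ (Nat.zero_le q))
    filter_upwards [this] with ω hω
    convert hω using 3
    push_cast
    ring
  filter_upwards [hkeyall] with ω hω
  rw [NormedAddCommGroup.tendsto_nhds_zero]
  intro ε hε
  obtain ⟨q, hq⟩ := exists_nat_gt (3 / ε)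
  have h3 : 3 / ((q:ℝ) + 1) < ε := by
    rw [div_lt_iff₀ (by positivity)]
    rw [div_lt_iff₀ hε] at hq
    nlinarith
  exact (hω q).mono fun m hm => lt_of_le_of_lt hm h3
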